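/- arXiv:2209.05713 — 2 statements merged into one kernel-verified Lean document; each statement's English description precedes it below -/
import Mathlib

section
/- If (p_n) is a sequence in (0,1) with n·p_n^{k+1} → 0 and n·p_n^{k} → ∞, then C(n, 2k+2) · p_n^{2k(k+1)} (1−p_n)^{k+1} (1−p_n^{k+1})^{n−2k−2} → ∞ as n → ∞. -/
open Filter in
private lemma key (k n : ℕ) (p : ℝ) (hp0 : 0 < p) (hp1 : p < 1)
    (hn : 2 * (2 * k + 2) ≤ n) (hA : (k + 1 : ℝ) * p ≤ 1 / 2)
    (hB : (n : ℝ) * p ^ (k + 1) ≤ 1 / 2) :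
    ((n : ℝ) * p ^ k / 2) ^ (2 * k + 2) / (4 * Nat.factorial (2 * k + 2)) ≤
      (n.choose (2 * k + 2) : ℝ) * p ^ (2 * k * (k + 1)) *
        (1 - p) ^ (k + 1) * (1 - p ^ (k + 1)) ^ (n - 2 * k - 2) := by
  set m := 2 * k + 2 with hm
  have hpow_nn : (0:ℝ) ≤ p ^ (2 * k * (k + 1)) := by positivity
  -- choose lower bound
  have c1 : ((n : ℝ) / 2) ^ m / (Nat.factorial m) ≤ (n.choose m : ℝ) := by
    refine le_trans ?_ (Nat.pow_le_choose m n)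
    gcongr
    have : ((n + 1 - m : ℕ) : ℝ) = (n : ℝ) + 1 - m := by
      have : m ≤ n + 1 := le_trans (by omega) (Nat.le_succ n)
      push_cast [Nat.cast_sub this]
      ring
    rw [this]
    have hmc : (m : ℝ) = 2 * (k:ℝ) + 2 := by simp only [hm]; push_cast; ring
    have : (m : ℝ) ≤ (n : ℝ) / 2 := by
      rw [hmc]
      have : (2 * m : ℕ) ≤ n := hn
      have : ((2*m : ℕ):ℝ) ≤ (n:ℝ) := Nat.cast_le.mpr this
      push_cast at this
      linarith
    linarith
  -- Bernoulli 1
  have c3 : (1 / 2 : ℝ) ≤ (1 - p) ^ (k + 1) := by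
    have hb := one_add_mul_le_pow (a := -p) (by linarith) (k + 1)
    rw [show (1:ℝ) + -p = 1 - p by ring] at hb
    push_cast at hb
    linarith
  -- Bernoulli 2
  have c4 : (1 / 2 : ℝ) ≤ (1 - p ^ (k + 1)) ^ (n - 2 * k - 2) := by
    have hpk : (0:ℝ) < p ^ (k + 1) := by positivity
    have hpk1 : p ^ (k + 1) < 1 := pow_lt_one₀ hp0.le hp1 (by omega)
    have hb := one_add_mul_le_pow (a := -(p ^ (k + 1))) (by linarith) (n - 2 * k - 2)
    have hle : ((n - 2 * k - 2 : ℕ) : ℝ) * p ^ (k + 1) ≤ (n : ℝ) * p ^ (k + 1) := by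
      gcongr
      exact_mod_cast Nat.sub_le _ _ |>.trans (Nat.sub_le _ _)
    rw [show (1:ℝ) + -p ^ (k+1) = 1 - p ^ (k+1) by ring] at hb
    linarith
  have hch : (0:ℝ) ≤ (n.choose m : ℝ) := by positivity
  have hX : (0:ℝ) ≤ (1 - p) ^ (k + 1) := by positivity
  have key0 : ((n : ℝ) * p ^ k / 2) ^ m = ((n : ℝ) / 2) ^ m * p ^ (2 * k * (k + 1)) := by
    rw [show ((n : ℝ) * p ^ k / 2) = ((n : ℝ) / 2) * p ^ k by ring, mul_pow, ← pow_mul]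
    congr 1
    ring
  calc ((n : ℝ) * p ^ k / 2) ^ m / (4 * (Nat.factorial m))
      = (((n : ℝ) / 2) ^ m / (Nat.factorial m) * p ^ (2 * k * (k + 1))) * (1/2) * (1/2) := by
        rw [key0]; ring
    _ ≤ ((n.choose m : ℝ) * p ^ (2 * k * (k + 1))) * ((1 - p) ^ (k + 1)) *
          ((1 - p ^ (k + 1)) ^ (n - 2 * k - 2)) := by
        have h1 : ((n : ℝ) / 2) ^ m / (Nat.factorial m) * p ^ (2 * k * (k + 1)) ≤
            (n.choose m : ℝ) * p ^ (2 * k * (k + 1)) :=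
          mul_le_mul_of_nonneg_right c1 hpow_nn
        have hnn : (0:ℝ) ≤ ((n : ℝ) / 2) ^ m / (Nat.factorial m) * p ^ (2 * k * (k + 1)) := by positivity
        refine mul_le_mul (mul_le_mul h1 c3 (by norm_num) (by positivity)) c4 (by norm_num) ?_
        positivity
    _ = _ := by ring

open Filter in
/-- If `p n ∈ (0,1)` with `n·p_n^{k+1} → 0` and `n·p_n^k → ∞`, then the expected number
of special persistent cycles,
`C(n, 2k+2) · p_n^{2k(k+1)} (1−p_n)^{k+1} (1−p_n^{k+1})^{n−2k−2}`, tends to infinity. -/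
theorem expected_special_cycles_tendsto_atTop
    (k : ℕ) (hk : 1 ≤ k) (p : ℕ → ℝ) (hp : ∀ n, p n ∈ Set.Ioo (0 : ℝ) 1)
    (h1 : Tendsto (fun n : ℕ => (n : ℝ) * p n ^ (k + 1)) atTop (nhds 0))
    (h2 : Tendsto (fun n : ℕ => (n : ℝ) * p n ^ k) atTop atTop) :
    Tendsto (fun n => (n.choose (2 * k + 2) : ℝ) * p n ^ (2 * k * (k + 1)) *
        (1 - p n) ^ (k + 1) * (1 - p n ^ (k + 1)) ^ (n - 2 * k - 2))
      atTop atTop := by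
  have hp0 : Tendsto p atTop (nhds 0) := by
    have h := h1.div_atTop h2
    refine h.congr' ?_
    filter_upwards [eventually_ge_atTop 1] with n hn
    have hn0 : (n : ℝ) ≠ 0 := by positivity
    have hpk : p n ^ k ≠ 0 := pow_ne_zero _ (hp n).1.ne'
    rw [pow_succ]
    field_simp
  have hA : ∀ᶠ n in atTop, (k + 1 : ℝ) * p n ≤ 1 / 2 := by
    have : Tendsto (fun n => (k + 1 : ℝ) * p n) atTop (nhds 0) := by
      simpa using Filter.Tendsto.const_mul ((k : ℝ) + 1) hp0
    filter_upwards [this.eventually_lt_const (by norm_num : (0:ℝ) < 1/2)] with n h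
    exact h.le
  have hB : ∀ᶠ n : ℕ in atTop, (n : ℝ) * p n ^ (k + 1) ≤ 1 / 2 := by
    filter_upwards [h1.eventually_lt_const (by norm_num : (0:ℝ) < 1/2)] with n h
    exact h.le
  have hg : Tendsto (fun n : ℕ =>
      ((n : ℝ) * p n ^ k / 2) ^ (2 * k + 2) / (4 * Nat.factorial (2 * k + 2))) atTop atTop := by
    refine Tendsto.atTop_div_const (by positivity) ?_
    exact (tendsto_pow_atTop (by omega : 2 * k + 2 ≠ 0)).comp
      (h2.atTop_div_const (by norm_num : (0:ℝ) < 2))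
  refine tendsto_atTop_mono' atTop ?_ hg
  filter_upwards [hA, hB, eventually_ge_atTop (2 * (2 * k + 2))] with n hA' hB' hn
  exact key k n (p n) (hp n).1 (hp n).2 hn hA' hB'
end

section
/- Fix k ≥ 1. If p_n ≤ n^{−α} for some α > 1/k, then with high probability the clique complex of G(n, p_n) has vanishing k-th homology. -/
open MeasureTheory Filter

noncomputable def erdosRenyi (n : ℕ) (p : ENNReal) (hp : p ≤ 1) :
    Measure (Sym2 (Fin n) → Bool) :=
  Measure.pi fun _ => (PMF.bernoulli p.toNNReal (by simpa using ENNReal.toNNReal_mono ENNReal.one_ne_top hp)).toMeasure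

def hasEdge {n : ℕ} (ω : Sym2 (Fin n) → Bool) (a b : Fin n) : Prop :=
  a ≠ b ∧ ω s(a, b) = true

/-- The clique complex of the graph encoded by `ω`. -/
def cliqueComplexOf {n : ℕ} (ω : Sym2 (Fin n) → Bool) : Set (Finset (Fin n)) :=
  {s | ∀ a ∈ s, ∀ b ∈ s, a ≠ b → hasEdge ω a b}

def chainSign {α : Type*} [LinearOrder α] (x : α) (t : Finset α) : ℤ :=
  (-1) ^ (t.filter (fun y => y < x)).card

def IsSimplicialChain {α : Type*} (K : Set (Finset α)) (k : ℕ) {F : Type*} [Field F]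
    (c : Finset α → F) : Prop :=
  ∀ s, c s ≠ 0 → s ∈ K ∧ s.card = k + 1

def simplicialBoundary {α : Type*} [Fintype α] [LinearOrder α] {F : Type*} [Field F]
    (c : Finset α → F) : Finset α → F :=
  fun t => ∑ x ∈ tᶜ, (chainSign x t : F) * c (insert x t)

/-- The `k`-th simplicial homology of `K` vanishes over `F`: every `k`-cycle is a
boundary. -/
def HomologyVanishes {α : Type*} [Fintype α] [LinearOrder α]
    (K : Set (Finset α)) (k : ℕ) (F : Type*) [Field F] : Prop :=
  ∀ c : Finset α → F, IsSimplicialChain K k c → simplicialBoundary c = 0 →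
    ∃ d : Finset α → F, IsSimplicialChain K (k + 1) d ∧ simplicialBoundary d = c

open Finset

section Sign
variable {α : Type*} [LinearOrder α]

lemma chainSign_mul_self (x : α) (t : Finset α) : chainSign x t * chainSign x t = 1 := by
  rw [chainSign, ← pow_add, Even.neg_one_pow ⟨_, rfl⟩]

lemma chainSign_insert (x y : α) (u : Finset α) (hx : x ∉ u) :
    chainSign y (insert x u) = (if x < y then -1 else 1) * chainSign y u := by
  unfold chainSign
  rw [Finset.filter_insert]
  split
  · rw [Finset.card_insert_of_notMem (fun h => hx (Finset.mem_of_mem_filter x h))]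
    rw [pow_succ]; ring
  · ring

lemma chainSign_anticomm (x y : α) (u : Finset α) (hxy : x ≠ y) (hx : x ∉ u) (hy : y ∉ u) :
    chainSign y (insert x u) * chainSign x (insert y u)
      + chainSign x u * chainSign y u = 0 := by
  rw [chainSign_insert x y u hx, chainSign_insert y x u hy]
  rcases lt_or_gt_of_ne hxy with h | h
  · rw [if_pos h, if_neg (not_lt.2 h.le)]; ring
  · rw [if_neg (not_lt.2 h.le), if_pos h]; ring

end Sign

section Cone
variable {α : Type*} [Fintype α] [LinearOrder α] {F : Type*} [Field F]

/-- The cone over a chain at vertex `x`. -/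
def coneC (x : α) (c : Finset α → F) : Finset α → F :=
  fun s => if x ∈ s then (chainSign x (s.erase x) : F) * c (s.erase x) else 0

lemma sq_one (x : α) (t : Finset α) :
    (chainSign x t : F) * (chainSign x t : F) = 1 := by
  rw [← Int.cast_mul, chainSign_mul_self, Int.cast_one]

/-- The fundamental cone identity `∂(x*c) + x*(∂c) = c`. -/
lemma boundary_coneC (x : α) (c : Finset α → F) (t : Finset α) :
    simplicialBoundary (coneC x c) t + coneC x (simplicialBoundary c) t = c t := by
  by_cases hx : x ∈ t
  · -- case x ∈ t
    set t' := t.erase x with ht'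
    have hxt' : x ∉ t' := Finset.notMem_erase x t
    have hins : insert x t' = t := Finset.insert_erase hx
    have h1 : simplicialBoundary (coneC x c) t
        = ∑ y ∈ tᶜ, ((chainSign y t : F) * (chainSign x (insert y t') : F)) * c (insert y t') := by
      rw [simplicialBoundary]
      apply Finset.sum_congr rfl
      intro y hy
      have hyt : y ∉ t := Finset.mem_compl.1 hy
      have hyx : y ≠ x := fun h => hyt (h ▸ hx)
      have hxin : x ∈ insert y t := Finset.mem_insert_of_mem hx
      have herase : (insert y t).erase x = insert y t' := by
        rw [ht', Finset.erase_insert_of_ne hyx]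
      rw [coneC, if_pos hxin, herase]; ring
    have h2 : coneC x (simplicialBoundary c) t
        = c t + ∑ y ∈ tᶜ, ((chainSign x t' : F) * (chainSign y t' : F)) * c (insert y t') := by
      rw [coneC, if_pos hx, ← ht', simplicialBoundary]
      have hcompl : (t')ᶜ = insert x tᶜ := by
        ext z
        simp only [Finset.mem_compl, ht', Finset.mem_erase, Finset.mem_insert]
        constructor
        · intro h
          by_cases hz : z = x
          · exact Or.inl hz
          · exact Or.inr (fun hzt => h ⟨hz, hzt⟩)
        · rintro (rfl | h) ⟨h1, h2⟩
          · exact h1 rfl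
          · exact h h2
      have hxnc : x ∉ tᶜ := by simp [hx]
      rw [hcompl, Finset.sum_insert hxnc, mul_add, hins, Finset.mul_sum]
      congr 1
      · rw [← mul_assoc, sq_one, one_mul]
      · apply Finset.sum_congr rfl
        intro y hy
        ring
    rw [h1, h2]
    have hz : (∑ y ∈ tᶜ, ((chainSign y t : F) * (chainSign x (insert y t') : F)) * c (insert y t'))
        + ∑ y ∈ tᶜ, ((chainSign x t' : F) * (chainSign y t' : F)) * c (insert y t') = 0 := by
      rw [← Finset.sum_add_distrib]
      apply Finset.sum_eq_zero
      intro y hy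
      have hyt : y ∉ t := Finset.mem_compl.1 hy
      have hyx : y ≠ x := fun h => hyt (h ▸ hx)
      have hyt' : y ∉ t' := fun h => hyt (Finset.mem_of_mem_erase h)
      have key : chainSign y (insert x t') * chainSign x (insert y t')
          + chainSign x t' * chainSign y t' = 0 := chainSign_anticomm x y t' hyx.symm hxt' hyt'
      have key2 : ((chainSign y (insert x t') * chainSign x (insert y t')
          + chainSign x t' * chainSign y t' : ℤ) : F) = 0 := by rw [key]; simp
      push_cast at key2
      rw [hins] at key2
      rw [← add_mul, key2, zero_mul]
    linear_combination hz
  · -- case x ∉ t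
    have h2 : coneC x (simplicialBoundary c) t = 0 := by rw [coneC, if_neg hx]
    have hxc : x ∈ tᶜ := Finset.mem_compl.2 hx
    have h1 : simplicialBoundary (coneC x c) t = c t := by
      rw [simplicialBoundary]
      rw [Finset.sum_eq_single x]
      · have hxin : x ∈ insert x t := Finset.mem_insert_self x t
        rw [coneC, if_pos hxin, Finset.erase_insert hx, ← mul_assoc, sq_one, one_mul]
      · intro y hy hyx
        have hyt : y ∉ t := Finset.mem_compl.1 hy
        have hni : x ∉ insert y t := by
          simp only [Finset.mem_insert]
          rintro (rfl | h)
          · exact hyx rfl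
          · exact hx h
        rw [coneC, if_neg hni, mul_zero]
      · intro h; exact absurd hxc h
    rw [h1, h2, add_zero]

end Cone

set_option linter.unusedSectionVars false

section Link
variable {α : Type*} [Fintype α] [LinearOrder α] {F : Type*} [Field F]

lemma boundary_add (a b : Finset α → F) (t : Finset α) :
    simplicialBoundary (fun s => a s + b s) t
      = simplicialBoundary a t + simplicialBoundary b t := by
  rw [simplicialBoundary, simplicialBoundary, simplicialBoundary, ← Finset.sum_add_distrib]
  exact Finset.sum_congr rfl (fun y _ => by ring)

lemma boundary_sub (a b : Finset α → F) (t : Finset α) :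
    simplicialBoundary (fun s => a s - b s) t
      = simplicialBoundary a t - simplicialBoundary b t := by
  rw [simplicialBoundary, simplicialBoundary, simplicialBoundary, ← Finset.sum_sub_distrib]
  exact Finset.sum_congr rfl (fun y _ => by ring)

/-- The link of a chain at `x`. -/
def linkC (x : α) (c : Finset α → F) : Finset α → F :=
  fun t => if x ∈ t then 0 else (chainSign x t : F) * c (insert x t)

lemma coneC_linkC (x : α) (c : Finset α → F) (s : Finset α) :
    coneC x (linkC x c) s = if x ∈ s then c s else 0 := by
  rw [coneC]
  by_cases hx : x ∈ s
  · rw [if_pos hx, if_pos hx, linkC, if_neg (Finset.notMem_erase x s),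
      Finset.insert_erase hx, ← mul_assoc, sq_one, one_mul]
  · rw [if_neg hx, if_neg hx]

lemma chainSign_ne_zero (x : α) (t : Finset α) : (chainSign x t : F) ≠ 0 := by
  intro h
  have := sq_one (F := F) x t
  rw [h, zero_mul] at this
  exact zero_ne_one this

lemma boundary_linkC (x : α) (c : Finset α → F) (hc : ∀ t, simplicialBoundary c t = 0) :
    ∀ t, simplicialBoundary (linkC x c) t = 0 := by
  intro t
  by_cases hx : x ∈ t
  · rw [simplicialBoundary]
    apply Finset.sum_eq_zero
    intro y hy
    have : x ∈ insert y t := Finset.mem_insert_of_mem hx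
    rw [linkC, if_pos this, mul_zero]
  · -- use the cone identity at `insert x t`
    have hkey := boundary_coneC x (linkC x c) (insert x t)
    have hxin : x ∈ insert x t := Finset.mem_insert_self x t
    have e1 : linkC (F := F) x c (insert x t) = 0 := by rw [linkC, if_pos hxin]
    have e2 : coneC x (simplicialBoundary (linkC x c)) (insert x t)
        = (chainSign x t : F) * simplicialBoundary (linkC x c) t := by
      rw [coneC, if_pos hxin, Finset.erase_insert hx]
    have e3 : simplicialBoundary (coneC x (linkC x c)) (insert x t) = 0 := by
      have congr1 : ∀ u : α, u ∈ (insert x t)ᶜ →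
          (chainSign u (insert x t) : F) * coneC x (linkC x c) (insert u (insert x t))
          = (chainSign u (insert x t) : F) * c (insert u (insert x t)) := by
        intro u _
        rw [coneC_linkC, if_pos (Finset.mem_insert_of_mem hxin)]
      rw [simplicialBoundary, Finset.sum_congr rfl congr1, ← simplicialBoundary, hc]
    rw [e1, e3, e2, zero_add] at hkey
    exact (mul_eq_zero.1 hkey).resolve_left (chainSign_ne_zero x t)

end Link

section Complex
variable {α : Type*} [Fintype α] [LinearOrder α] {F : Type*} [Field F]

/-- The clique complex of an abstract adjacency relation. -/
def KK (adj : α → α → Prop) : Set (Finset α) :=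
  {s | ∀ a ∈ s, ∀ b ∈ s, a ≠ b → adj a b}

open Classical in
/-- neighbors of `x` inside `W`. -/
noncomputable def nbr (adj : α → α → Prop) (x : α) (W : Finset α) : Finset α :=
  (W.erase x).filter (fun y => adj x y)

lemma nbr_subset (adj : α → α → Prop) (x : α) (W : Finset α) : nbr adj x W ⊆ W.erase x := by
  classical
  intro z hz
  simp only [nbr] at hz
  exact Finset.mem_of_mem_filter z hz

lemma mem_nbr {adj : α → α → Prop} {x y : α} {W : Finset α} :
    y ∈ nbr adj x W ↔ (y ∈ W ∧ y ≠ x ∧ adj x y) := by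
  classical
  simp only [nbr, Finset.mem_filter, Finset.mem_erase]
  tauto

/-- Hereditary low degree / cone condition. -/
def GoodG (adj : α → α → Prop) (j : ℕ) (U : Finset α) : Prop :=
  ∀ W ⊆ U, W.Nonempty →
    ∃ x ∈ W, (∀ y ∈ W, y ≠ x → adj x y) ∨ (nbr adj x W).card + 1 ≤ 2 * j

lemma goodG_mono {adj : α → α → Prop} {j : ℕ} {U U' : Finset α} (h : GoodG adj j U)
    (hsub : U' ⊆ U) : GoodG adj j U' :=
  fun W hW => h W (hW.trans hsub)

lemma smallGood (adj : α → α → Prop) (j : ℕ) (U : Finset α) (hU : U.card ≤ 2 * j + 1) :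
    GoodG adj j U := by
  intro W hW hWne
  by_cases h : ∃ x ∈ W, ∃ y ∈ W, y ≠ x ∧ ¬ adj x y
  · obtain ⟨x, hx, y, hy, hyx, hnadj⟩ := h
    refine ⟨x, hx, Or.inr ?_⟩
    have hsub : nbr adj x W ⊆ (W.erase x).erase y := by
      intro z hz
      rw [mem_nbr] at hz
      refine Finset.mem_erase.2 ⟨?_, Finset.mem_erase.2 ⟨hz.2.1, hz.1⟩⟩
      rintro rfl; exact hnadj hz.2.2
    have h1 : ((W.erase x).erase y).card + 2 ≤ W.card := by
      rw [Finset.card_erase_of_mem (Finset.mem_erase.2 ⟨hyx, hy⟩), Finset.card_erase_of_mem hx]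
      have : 2 ≤ W.card := Finset.one_lt_card.2 ⟨x, hx, y, hy, fun h => hyx h.symm⟩
      omega
    have h2 := Finset.card_le_card hsub
    have h3 := Finset.card_le_card (hW.trans (Finset.Subset.refl U))
    have h4 := Finset.card_le_card hW
    omega
  · push_neg at h
    obtain ⟨x, hx⟩ := hWne
    exact ⟨x, hx, Or.inl (fun y hy hyx => h x hx y hy hyx)⟩

lemma KK_insert {adj : α → α → Prop} (hsym : ∀ a b, adj a b → adj b a) {t : Finset α} {x : α}
    (hK : t ∈ KK adj) (hadj : ∀ v ∈ t, v ≠ x → adj x v) : insert x t ∈ KK adj := by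
  intro a ha b hb hab
  rcases Finset.mem_insert.1 ha with rfl | ha'
  · rcases Finset.mem_insert.1 hb with rfl | hb'
    · exact absurd rfl hab
    · exact hadj b hb' (fun h => hab h.symm)
  · rcases Finset.mem_insert.1 hb with rfl | hb'
    · exact hsym _ _ (hadj a ha' hab)
    · exact hK a ha' b hb' hab

lemma KK_subset {adj : α → α → Prop} {s t : Finset α} (h : s ∈ KK adj) (hts : t ⊆ s) :
    t ∈ KK adj :=
  fun a ha b hb hab => h a (hts ha) b (hts hb) hab

lemma boundary_comb1 {F : Type*} [Field F] (a b w : Finset α → F) (t : Finset α) :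
    simplicialBoundary (fun s => a s - b s + w s) t
      = simplicialBoundary a t - simplicialBoundary b t + simplicialBoundary w t := by
  rw [simplicialBoundary, simplicialBoundary, simplicialBoundary, simplicialBoundary,
    ← Finset.sum_sub_distrib, ← Finset.sum_add_distrib]
  exact Finset.sum_congr rfl (fun y _ => by ring)

lemma boundary_coneC_of_cycle (x : α) (c : Finset α → F)
    (hc : ∀ t, simplicialBoundary c t = 0) :
    ∀ t, simplicialBoundary (coneC x c) t = c t := by
  intro t
  have h := boundary_coneC x c t
  have h2 : coneC x (simplicialBoundary c) t = 0 := by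
    rw [coneC]
    split
    · rw [hc, mul_zero]
    · rfl
  rw [h2, add_zero] at h
  exact h

theorem boundL {adj : α → α → Prop} (hsym : ∀ a b, adj a b → adj b a)
    (j : ℕ) (U : Finset α) (hGood : GoodG adj j U) (c : Finset α → F)
    (hchain : ∀ s, c s ≠ 0 → s ∈ KK adj ∧ s.card = j + 1 ∧ s ⊆ U)
    (hcyc : ∀ t, simplicialBoundary c t = 0) :
    ∃ d : Finset α → F,
      (∀ s, d s ≠ 0 → s ∈ KK adj ∧ s.card = j + 2 ∧ s ⊆ U) ∧
      (∀ t, simplicialBoundary d t = c t) := by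
  by_cases hc0 : ∀ s, c s = 0
  · refine ⟨fun _ => 0, fun s hs => absurd rfl hs, fun t => ?_⟩
    rw [simplicialBoundary, hc0 t]
    exact Finset.sum_eq_zero (fun y _ => by rw [mul_zero])
  push_neg at hc0
  obtain ⟨s₀, hs₀⟩ := hc0
  obtain ⟨hK₀, hcard₀, hsub₀⟩ := hchain s₀ hs₀
  have hUne : U.Nonempty := by
    have : s₀.Nonempty := Finset.card_pos.1 (by omega)
    exact ⟨this.choose, hsub₀ this.choose_spec⟩
  obtain ⟨x, hxU, hcase⟩ := hGood U (Finset.Subset.refl U) hUne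
  rcases hcase with hcone | hdeg
  · -- cone case
    refine ⟨coneC x c, ?_, boundary_coneC_of_cycle x c hcyc⟩
    intro s hs
    rw [coneC] at hs
    split at hs
    next hxs =>
      have hcne : c (s.erase x) ≠ 0 := by
        intro h; rw [h, mul_zero] at hs; exact hs rfl
      obtain ⟨hK, hcard, hsub⟩ := hchain _ hcne
      refine ⟨?_, ?_, ?_⟩
      · rw [← Finset.insert_erase hxs]
        exact KK_insert hsym hK (fun v hv hvx => hcone v (hsub hv) hvx)
      · have := Finset.card_erase_add_one hxs
        omega
      · intro a ha
        by_cases hax : a = x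
        · subst hax; exact hxU
        · exact hsub (Finset.mem_erase.2 ⟨hax, ha⟩)
    next => exact absurd rfl hs
  · -- low degree case
    obtain ⟨j', hj'⟩ : ∃ j'', j = j'' + 1 := ⟨j - 1, by omega⟩
    set N := nbr adj x U with hN
    have hNcard : N.card ≤ 2 * j' + 1 := by omega
    set z := linkC (F := F) x c with hzdef
    have hzchain : ∀ t, z t ≠ 0 → t ∈ KK adj ∧ t.card = j' + 1 ∧ t ⊆ N := by
      intro t ht
      rw [hzdef, linkC] at ht
      split at ht
      next => exact absurd rfl ht
      next hxt =>
        have hcne : c (insert x t) ≠ 0 := by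
          intro h; rw [h, mul_zero] at ht; exact ht rfl
        obtain ⟨hK, hcard, hsub⟩ := hchain _ hcne
        have hcardt : t.card = j' + 1 := by
          have := Finset.card_insert_of_notMem hxt
          omega
        refine ⟨KK_subset hK (Finset.subset_insert x t), hcardt, ?_⟩
        intro v hv
        have hvx : v ≠ x := fun h => hxt (h ▸ hv)
        have hadj : adj x v := hK x (Finset.mem_insert_self x t) v
          (Finset.mem_insert_of_mem hv) (fun h => hvx h.symm)
        exact mem_nbr.2 ⟨hsub (Finset.mem_insert_of_mem hv), hvx, hadj⟩
    have hzcyc : ∀ t, simplicialBoundary z t = 0 := boundary_linkC x c hcyc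
    obtain ⟨w, hwchain, hwb⟩ := boundL hsym j' N (smallGood adj j' N hNcard) z hzchain hzcyc
    set c' : Finset α → F := fun s => (c s - coneC x z s) + w s with hc'def
    have hcx : ∀ s, coneC x z s = if x ∈ s then c s else 0 := coneC_linkC x c
    have hNsub : N ⊆ U.erase x := nbr_subset adj x U
    have hxNot : x ∉ N := fun h => (Finset.mem_erase.1 (hNsub h)).1 rfl
    have hc'chain : ∀ s, c' s ≠ 0 → s ∈ KK adj ∧ s.card = j + 1 ∧ s ⊆ U.erase x := by
      intro s hs0
      have hs : (c s - coneC x z s) + w s ≠ 0 := hs0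
      rw [hcx] at hs
      by_cases hxs : x ∈ s
      · rw [if_pos hxs] at hs
        have hws : w s ≠ 0 := by intro h; rw [h] at hs; simp at hs
        have := (hwchain s hws).2.2
        exact absurd (this hxs) hxNot
      · rw [if_neg hxs, sub_zero] at hs
        by_cases hcs : c s ≠ 0
        · obtain ⟨hK, hcard, hsub⟩ := hchain s hcs
          exact ⟨hK, hcard, Finset.subset_erase.2 ⟨hsub, hxs⟩⟩
        · push_neg at hcs
          rw [hcs, zero_add] at hs
          obtain ⟨hK, hcard, hsub⟩ := hwchain s hs
          exact ⟨hK, by omega, hsub.trans hNsub⟩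
    have hconez : ∀ t, simplicialBoundary (coneC x z) t = z t :=
      boundary_coneC_of_cycle x z hzcyc
    have hc'cyc : ∀ t, simplicialBoundary c' t = 0 := by
      intro t
      show simplicialBoundary (fun s => (c s - coneC x z s) + w s) t = 0
      rw [boundary_comb1 c (coneC x z) w t, hcyc, hconez, hwb, zero_sub, neg_add_cancel]
    have hGood' : GoodG adj j (U.erase x) := goodG_mono hGood (Finset.erase_subset x U)
    obtain ⟨d', hd'chain, hd'b⟩ := boundL hsym j (U.erase x) hGood' c' hc'chain hc'cyc
    refine ⟨fun s => d' s - coneC x w s, ?_, ?_⟩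
    · intro s hs0
      have hs : d' s - coneC x w s ≠ 0 := hs0
      by_cases hd's : d' s ≠ 0
      · obtain ⟨hK, hcard, hsub⟩ := hd'chain s hd's
        exact ⟨hK, hcard, hsub.trans (Finset.erase_subset x U)⟩
      · push_neg at hd's
        rw [hd's, zero_sub, neg_ne_zero] at hs
        rw [coneC] at hs
        split at hs
        next hxs =>
          have hwne : w (s.erase x) ≠ 0 := by
            intro h; rw [h, mul_zero] at hs; exact hs rfl
          obtain ⟨hK, hcard, hsub⟩ := hwchain _ hwne
          refine ⟨?_, ?_, ?_⟩
          · rw [← Finset.insert_erase hxs]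
            exact KK_insert hsym hK (fun v hv _ => (mem_nbr.1 (hsub hv)).2.2)
          · have := Finset.card_erase_add_one hxs
            omega
          · intro a ha
            by_cases hax : a = x
            · subst hax; exact hxU
            · have : a ∈ s.erase x := Finset.mem_erase.2 ⟨hax, ha⟩
              exact (Finset.mem_erase.1 (hNsub (hsub this))).2
        next => exact absurd rfl hs
    · intro t
      show simplicialBoundary (fun s => d' s - coneC x w s) t = c t
      rw [boundary_sub d' (coneC x w) t, hd'b]
      have e3 := boundary_coneC x w t
      have e4 : coneC x (simplicialBoundary w) t = coneC x z t := by
        rw [coneC, coneC]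
        split
        · rw [hwb]
        · rfl
      rw [e4] at e3
      have e5 : simplicialBoundary (coneC x w) t = w t - coneC x z t := by
        rw [← e3]; ring
      rw [e5]
      show (c t - coneC x z t) + w t - (w t - coneC x z t) = c t
      ring
termination_by (j, U.card)
decreasing_by
  · exact Prod.Lex.left _ _ (by omega)
  · exact Prod.Lex.right _ (Finset.card_lt_card (Finset.erase_ssubset hxU))

end Complex

section Graph
variable {α : Type*} [Fintype α] [LinearOrder α]

/-- `k(k+1)/2`. -/
def K2 (k : ℕ) : ℕ := k * (k + 1) / 2

lemma two_K2 (k : ℕ) : 2 * K2 k = k * (k + 1) := by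
  rw [K2, Nat.mul_div_cancel']
  exact even_iff_two_dvd.1 (Nat.even_mul_succ_self k)

open Classical in
noncomputable def graphOn (adj : α → α → Prop) (W : Finset α) : SimpleGraph α :=
  SimpleGraph.fromRel (fun a b => a ∈ W ∧ b ∈ W ∧ adj a b)

open Classical in
noncomputable def eCount (adj : α → α → Prop) (W : Finset α) : ℕ :=
  (graphOn adj W).edgeSet.ncard

variable {adj : α → α → Prop}

lemma graphOn_adj_iff (hsym : ∀ a b, adj a b → adj b a) {W : Finset α} {a b : α} :
    (graphOn adj W).Adj a b ↔ a ≠ b ∧ a ∈ W ∧ b ∈ W ∧ adj a b := by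
  rw [graphOn, SimpleGraph.fromRel_adj]
  constructor
  · rintro ⟨hne, h | h⟩
    · exact ⟨hne, h⟩
    · exact ⟨hne, h.2.1, h.1, hsym _ _ h.2.2⟩
  · rintro ⟨hne, h⟩
    exact ⟨hne, Or.inl h⟩

lemma mem_edge_of_graphOn (hsym : ∀ a b, adj a b → adj b a) {W : Finset α} {e : Sym2 α}
    (he : e ∈ (graphOn adj W).edgeSet) :
    ∃ a b, e = s(a, b) ∧ a ≠ b ∧ a ∈ W ∧ b ∈ W ∧ adj a b := by
  induction e with
  | _ a b =>
    rw [SimpleGraph.mem_edgeSet, graphOn_adj_iff hsym] at he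
    exact ⟨a, b, rfl, he⟩

lemma handshake (hsym : ∀ a b, adj a b → adj b a) (W : Finset α) :
    ∑ x ∈ W, (nbr adj x W).card = 2 * eCount adj W := by
  classical
  have hdeg : ∀ x, x ∈ W → (graphOn adj W).degree x = (nbr adj x W).card := by
    intro x hx
    rw [SimpleGraph.degree]
    congr 1
    ext y
    rw [SimpleGraph.mem_neighborFinset, graphOn_adj_iff hsym, mem_nbr]
    constructor
    · rintro ⟨hne, _, hyW, hadj⟩
      exact ⟨hyW, fun h => hne h.symm, hadj⟩
    · rintro ⟨hyW, hne, hadj⟩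
      exact ⟨fun h => hne h.symm, hx, hyW, hadj⟩
  have hdeg0 : ∀ x ∈ Finset.univ, x ∉ W → (graphOn adj W).degree x = 0 := by
    intro x _ hx
    rw [SimpleGraph.degree, Finset.card_eq_zero]
    ext y
    simp only [SimpleGraph.mem_neighborFinset, Finset.notMem_empty, iff_false]
    rw [graphOn_adj_iff hsym]
    rintro ⟨_, hxW, _⟩
    exact hx hxW
  have h1 : ∑ x ∈ W, (nbr adj x W).card = ∑ x ∈ W, (graphOn adj W).degree x :=
    Finset.sum_congr rfl (fun x hx => (hdeg x hx).symm)
  rw [h1, Finset.sum_subset (Finset.subset_univ W) hdeg0,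
    SimpleGraph.sum_degrees_eq_twice_card_edges]
  congr 1
  rw [eCount, SimpleGraph.edgeFinset, Set.ncard_eq_toFinset_card']

lemma eCount_mono {W W' : Finset α} (h : W ⊆ W') : eCount adj W ≤ eCount adj W' := by
  apply Set.ncard_le_ncard _ (Set.toFinite _)
  apply SimpleGraph.edgeSet_mono
  intro a b hab
  rw [graphOn] at hab ⊢
  rw [SimpleGraph.fromRel_adj] at hab ⊢
  obtain ⟨hne, hor⟩ := hab
  refine ⟨hne, ?_⟩
  rcases hor with ⟨h1, h2, h3⟩ | ⟨h1, h2, h3⟩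
  · exact Or.inl ⟨h h1, h h2, h3⟩
  · exact Or.inr ⟨h h1, h h2, h3⟩

lemma vertex_mem_of_edge {W : Finset α} {e : Sym2 α} (he : e ∈ (graphOn adj W).edgeSet)
    {v : α} (hv : v ∈ e) : v ∈ W := by
  induction e with
  | _ a b =>
    rw [SimpleGraph.mem_edgeSet, graphOn, SimpleGraph.fromRel_adj] at he
    rcases Sym2.mem_iff.1 hv with rfl | rfl
    · rcases he.2 with h | h
      · exact h.1
      · exact h.2.1
    · rcases he.2 with h | h
      · exact h.2.1
      · exact h.1

lemma eCount_insert (hsym : ∀ a b, adj a b → adj b a) {W B : Finset α} {x : α} (hx : x ∉ W)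
    (hBW : B ⊆ W) (hadj : ∀ y ∈ B, y ≠ x ∧ adj x y) :
    eCount adj W + B.card ≤ eCount adj (insert x W) := by
  classical
  set T : Finset (Sym2 α) := B.image (fun y => s(x, y)) with hT
  have hTcard : T.card = B.card := by
    rw [hT]
    apply Finset.card_image_of_injOn
    intro y hy y' hy' hee
    rcases Sym2.eq_iff.1 hee with ⟨_, h⟩ | ⟨h1, h2⟩
    · exact h
    · exact absurd h1.symm (hadj y' hy').1
  have hTsub : (↑T : Set (Sym2 α)) ⊆ (graphOn adj (insert x W)).edgeSet := by
    intro e he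
    rw [Finset.mem_coe, hT, Finset.mem_image] at he
    obtain ⟨y, hy, rfl⟩ := he
    rw [SimpleGraph.mem_edgeSet, graphOn_adj_iff hsym]
    exact ⟨fun h => (hadj y hy).1 h.symm, Finset.mem_insert_self x W,
      Finset.mem_insert_of_mem (hBW hy), (hadj y hy).2⟩
  have hdisj : Disjoint ((graphOn adj W).edgeSet) (↑T : Set (Sym2 α)) := by
    rw [Set.disjoint_left]
    intro e he heT
    rw [Finset.mem_coe, hT, Finset.mem_image] at heT
    obtain ⟨y, hy, rfl⟩ := heT
    exact hx (vertex_mem_of_edge he (Sym2.mem_mk_left x y))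
  have hsub : (graphOn adj W).edgeSet ∪ (↑T : Set (Sym2 α))
      ⊆ (graphOn adj (insert x W)).edgeSet := by
    apply Set.union_subset _ hTsub
    intro e he
    apply SimpleGraph.edgeSet_mono _ he
    intro a b hab
    rw [graphOn, SimpleGraph.fromRel_adj] at hab ⊢
    refine ⟨hab.1, ?_⟩
    rcases hab.2 with ⟨h1, h2, h3⟩ | ⟨h1, h2, h3⟩
    · exact Or.inl ⟨Finset.mem_insert_of_mem h1, Finset.mem_insert_of_mem h2, h3⟩
    · exact Or.inr ⟨Finset.mem_insert_of_mem h1, Finset.mem_insert_of_mem h2, h3⟩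
  calc eCount adj W + B.card
      = ((graphOn adj W).edgeSet ∪ (↑T : Set (Sym2 α))).ncard := by
        rw [Set.ncard_union_eq hdisj (Set.toFinite _) (Set.toFinite _),
          Set.ncard_coe_finset, hTcard, eCount]
    _ ≤ eCount adj (insert x W) := Set.ncard_le_ncard hsub (Set.toFinite _)

lemma mindeg_edges {W : Finset α} {m : ℕ} (hsym : ∀ a b, adj a b → adj b a)
    (h : ∀ x ∈ W, m ≤ (nbr adj x W).card) : W.card * m ≤ 2 * eCount adj W := by
  rw [← handshake hsym W]
  calc W.card * m = ∑ _x ∈ W, m := by rw [Finset.sum_const, smul_eq_mul]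
    _ ≤ ∑ x ∈ W, (nbr adj x W).card := Finset.sum_le_sum h

lemma eCount_clique (hsym : ∀ a b, adj a b → adj b a) {s : Finset α} (hK : s ∈ KK adj) :
    2 * eCount adj s = s.card * (s.card - 1) := by
  rw [← handshake hsym s]
  have : ∀ x ∈ s, (nbr adj x s).card = s.card - 1 := by
    intro x hx
    have : nbr adj x s = s.erase x := by
      ext y
      rw [mem_nbr, Finset.mem_erase]
      constructor
      · rintro ⟨h1, h2, _⟩; exact ⟨h2, h1⟩
      · rintro ⟨h1, h2⟩
        exact ⟨h2, h1, hK x hx y h2 (fun h => h1 h.symm)⟩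
    rw [this, Finset.card_erase_of_mem hx]
  rw [Finset.sum_congr rfl this, Finset.sum_const, smul_eq_mul]

lemma eCount_witness {W : Finset α} {m : ℕ} (hsym : ∀ a b, adj a b → adj b a)
    (h : m ≤ eCount adj W) :
    ∃ Fs : Finset (Sym2 α), Fs.card = m ∧
      ∀ e ∈ Fs, ∃ a b, e = s(a, b) ∧ a ≠ b ∧ a ∈ W ∧ b ∈ W ∧ adj a b := by
  classical
  set EF := (Set.toFinite ((graphOn adj W).edgeSet)).toFinset with hEF
  have hEFcard : m ≤ EF.card := by
    rw [hEF, ← Set.ncard_eq_toFinset_card _ (Set.toFinite ((graphOn adj W).edgeSet))]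
    exact h
  obtain ⟨Fs, hFsub, hFcard⟩ := Finset.exists_subset_card_eq hEFcard
  refine ⟨Fs, hFcard, fun e he => ?_⟩
  have : e ∈ (graphOn adj W).edgeSet := by
    have := hFsub he
    rwa [hEF, Set.Finite.mem_toFinset] at this
  exact mem_edge_of_graphOn hsym this

/-- `GoodG` follows from absence of dense small subgraphs. -/
lemma goodG_of_edges {k : ℕ} {V : Finset α} (hsym : ∀ a b, adj a b → adj b a)
    (hE2 : ∀ W : Finset α, W ⊆ V → 2 * k + 1 ≤ W.card → eCount adj W < k * W.card) :
    GoodG adj k V := by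
  intro W hWV hWne
  by_cases hsmall : W.card ≤ 2 * k
  · obtain ⟨x, hx⟩ := hWne
    refine ⟨x, hx, Or.inr ?_⟩
    have h1 : (nbr adj x W).card ≤ W.card - 1 := by
      have := Finset.card_le_card ((nbr_subset adj x W))
      rw [Finset.card_erase_of_mem hx] at this
      exact this
    have h2 : 1 ≤ W.card := Finset.card_pos.2 ⟨x, hx⟩
    omega
  · push_neg at hsmall
    have hlt := hE2 W hWV (by omega)
    by_contra hcon
    push_neg at hcon
    have hall : ∀ x ∈ W, 2 * k ≤ (nbr adj x W).card := by
      intro x hx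
      have := (hcon x hx).2
      omega
    have := mindeg_edges hsym hall
    have h2 : W.card * (2 * k) = 2 * (k * W.card) := by ring
    omega

/-- Greedy span/edge-count growth along a face-connected family. -/
lemma greedy {k : ℕ} (hsym : ∀ a b, adj a b → adj b a) (C : Finset (Finset α))
    (s₀ : Finset α) (hs₀ : s₀ ∈ C)
    (hcl : ∀ s ∈ C, s ∈ KK adj ∧ s.card = k + 1)
    (hreach : ∀ s ∈ C, Relation.ReflTransGen (fun a b => b ∈ C ∧ (a ∩ b).card = k) s₀ s) :
    ∀ u, k + 1 ≤ u → u ≤ (C.biUnion id).card →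
      ∃ W : Finset α, W ⊆ C.biUnion id ∧ s₀ ⊆ W ∧ W.card = u ∧
        k * u ≤ eCount adj W + K2 k := by
  classical
  intro u hku
  induction u, hku using Nat.le_induction with
  | base =>
    intro _
    refine ⟨s₀, Finset.subset_biUnion_of_mem id hs₀, Finset.Subset.refl s₀,
      (hcl s₀ hs₀).2, ?_⟩
    have hcl₀ := hcl s₀ hs₀
    have hcc := eCount_clique hsym hcl₀.1
    rw [hcl₀.2] at hcc
    have hmm : (k + 1) * (k + 1 - 1) = k * (k + 1) := by
      rw [Nat.add_sub_cancel]; ring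
    rw [hmm] at hcc
    have h2 := two_K2 k
    omega
  | succ u hu ih =>
    intro hcard
    obtain ⟨W, hWV, hs₀W, hWcard, hWinv⟩ := ih (by omega)
    -- find a member of C not inside W
    have hexists : ∃ s ∈ C, ¬ s ⊆ W := by
      by_contra hno
      push_neg at hno
      have : C.biUnion id ⊆ W := by
        intro v hv
        rw [Finset.mem_biUnion] at hv
        obtain ⟨s, hs, hvs⟩ := hv
        exact hno s hs hvs
      have := Finset.card_le_card this
      omega
    obtain ⟨sstar, hsstar, hnsub⟩ := hexists
    -- find first exit along the path
    have hexit : ∀ b : Finset α, Relation.ReflTransGen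
        (fun a b => b ∈ C ∧ (a ∩ b).card = k) s₀ b → ¬ b ⊆ W →
        ∃ a b', (b' ∈ C ∧ (a ∩ b').card = k) ∧ a ⊆ W ∧ ¬ b' ⊆ W := by
      intro b hpath
      induction hpath with
      | refl => intro hc; exact absurd hs₀W hc
      | @tail a' b' _hab step ih2 =>
        intro hby
        by_cases ha' : a' ⊆ W
        · exact ⟨a', b', step, ha', hby⟩
        · exact ih2 ha'
    obtain ⟨a, b, ⟨hbC, hab⟩, haW, hbW⟩ := hexit sstar (hreach sstar hsstar) hnsub
    have hbcl := hcl b hbC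
    -- b has exactly one vertex outside W
    have hint : a ∩ b ⊆ b ∩ W := by
      intro v hv
      rw [Finset.mem_inter] at hv ⊢
      exact ⟨hv.2, haW hv.1⟩
    have hbWcard : k ≤ (b ∩ W).card := hab ▸ Finset.card_le_card hint
    have hdiff : (b \ W).Nonempty := by
      rw [Finset.sdiff_nonempty]
      exact hbW
    have hdcard : (b \ W).card = 1 := by
      have h1 := Finset.card_sdiff_add_card_inter b W
      have h2 : 1 ≤ (b \ W).card := Finset.card_pos.2 hdiff
      omega
    obtain ⟨x, hxd⟩ := Finset.card_eq_one.1 hdcard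
    have hxb : x ∈ b := by
      have : x ∈ b \ W := hxd ▸ Finset.mem_singleton_self x
      exact (Finset.mem_sdiff.1 this).1
    have hxW : x ∉ W := by
      have : x ∈ b \ W := hxd ▸ Finset.mem_singleton_self x
      exact (Finset.mem_sdiff.1 this).2
    have hbeW : b.erase x ⊆ W := by
      intro v hv
      rw [Finset.mem_erase] at hv
      by_contra hvW
      have : v ∈ b \ W := Finset.mem_sdiff.2 ⟨hv.2, hvW⟩
      rw [hxd, Finset.mem_singleton] at this
      exact hv.1 this
    refine ⟨insert x W, ?_, hs₀W.trans (Finset.subset_insert x W), ?_, ?_⟩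
    · intro v hv
      rcases Finset.mem_insert.1 hv with rfl | hvW
      · exact Finset.subset_biUnion_of_mem id hbC hxb
      · exact hWV hvW
    · rw [Finset.card_insert_of_notMem hxW, hWcard]
    · have hstep := eCount_insert hsym hxW hbeW (fun y hy =>
        ⟨(Finset.mem_erase.1 hy).1, hbcl.1 x hxb y (Finset.mem_of_mem_erase hy)
          (fun h => (Finset.mem_erase.1 hy).1 h.symm)⟩)
      have hbek : (b.erase x).card = k := by
        rw [Finset.card_erase_of_mem hxb, hbcl.2]
        omega
      rw [hbek] at hstep
      have hexp : k * (u + 1) = k * u + k := by ring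
      omega

end Graph

section Master
variable {α : Type*} [Fintype α] [LinearOrder α] {F : Type*} [Field F]

theorem detAux {adj : α → α → Prop} (hsym : ∀ a b, adj a b → adj b a)
    (k V₁ : ℕ) (hk : 1 ≤ k) (hkV : k + 1 ≤ V₁)
    (hE1 : ∀ U : Finset α, U.card = V₁ → eCount adj U + K2 k < k * V₁)
    (hE2 : ∀ W : Finset α, W.card ≤ V₁ → 2 * k + 1 ≤ W.card → eCount adj W < k * W.card) :
    ∀ (M : ℕ) (c : Finset α → F), {s | c s ≠ 0}.ncard ≤ M →
      (∀ s, c s ≠ 0 → s ∈ KK adj ∧ s.card = k + 1) →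
      (∀ t, simplicialBoundary c t = 0) →
      ∃ d : Finset α → F,
        (∀ s, d s ≠ 0 → s ∈ KK adj ∧ s.card = k + 2) ∧
        (∀ t, simplicialBoundary d t = c t) := by
  intro M
  induction M with
  | zero =>
    intro c hM hchain hcyc
    have hz : ∀ s, c s = 0 := by
      intro s
      by_contra hs
      have : 0 < {s | c s ≠ 0}.ncard := (Set.ncard_pos (Set.toFinite _)).2 ⟨s, hs⟩
      omega
    refine ⟨fun _ => 0, fun s hs => absurd rfl hs, fun t => ?_⟩
    rw [simplicialBoundary, hz t]
    exact Finset.sum_eq_zero (fun y _ => by rw [mul_zero])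
  | succ M ih =>
    intro c hM hchain hcyc
    classical
    by_cases hc0 : ∀ s, c s = 0
    · refine ⟨fun _ => 0, fun s hs => absurd rfl hs, fun t => ?_⟩
      rw [simplicialBoundary, hc0 t]
      exact Finset.sum_eq_zero (fun y _ => by rw [mul_zero])
    push_neg at hc0
    obtain ⟨s₀, hs₀⟩ := hc0
    set S : Finset (Finset α) := Finset.univ.filter (fun s => c s ≠ 0) with hS
    have hmemS : ∀ s, s ∈ S ↔ c s ≠ 0 := by
      intro s; rw [hS, Finset.mem_filter]; simp
    set Rel : Finset α → Finset α → Prop := fun a b => b ∈ S ∧ (a ∩ b).card = k with hRel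
    set C : Finset (Finset α) := S.filter (fun s => Relation.ReflTransGen Rel s₀ s) with hC
    have hmemC : ∀ s, s ∈ C ↔ (s ∈ S ∧ Relation.ReflTransGen Rel s₀ s) := by
      intro s; rw [hC, Finset.mem_filter]
    have hs₀S : s₀ ∈ S := (hmemS s₀).2 hs₀
    have hs₀C : s₀ ∈ C := (hmemC s₀).2 ⟨hs₀S, Relation.ReflTransGen.refl⟩
    -- coface closure of C
    have hclose : ∀ (t : Finset α) (y₀ y : α), y₀ ∉ t → y ∉ t →
        insert y₀ t ∈ C → insert y t ∈ S → insert y t ∈ C := by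
      intro t y₀ y hy₀ hy h₀C hyS
      by_cases heq : y = y₀
      · subst heq; exact h₀C
      · obtain ⟨h₀S, h₀path⟩ := (hmemC _).1 h₀C
        have hcard₀ : (insert y₀ t).card = k + 1 := (hchain _ ((hmemS _).1 h₀S)).2
        have htcard : t.card = k := by
          have := Finset.card_insert_of_notMem hy₀
          omega
        have hint : insert y₀ t ∩ insert y t = t := by
          ext v
          simp only [Finset.mem_inter, Finset.mem_insert]
          constructor
          · rintro ⟨rfl | hv, h2⟩
            · rcases h2 with h2 | h2
              · exact absurd h2 (fun h => heq h.symm)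
              · exact absurd h2 hy₀
            · exact hv
          · intro hv; exact ⟨Or.inr hv, Or.inr hv⟩
        refine (hmemC _).2 ⟨hyS, h₀path.tail ?_⟩
        rw [hRel]
        exact ⟨hyS, by rw [hint]; exact htcard⟩
    set c₁ : Finset α → F := fun s => if s ∈ C then c s else 0 with hc₁
    set c₂ : Finset α → F := fun s => c s - c₁ s with hc₂
    have hbc₁ : ∀ t, simplicialBoundary c₁ t = 0 := by
      intro t
      by_cases hex : ∃ y, y ∉ t ∧ insert y t ∈ C
      · obtain ⟨y₀, hy₀t, hy₀C⟩ := hex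
        have : simplicialBoundary c₁ t = simplicialBoundary c t := by
          rw [simplicialBoundary, simplicialBoundary]
          apply Finset.sum_congr rfl
          intro y hy
          have hyt : y ∉ t := Finset.mem_compl.1 hy
          congr 1
          show (if insert y t ∈ C then c (insert y t) else 0) = c (insert y t)
          by_cases hyC : insert y t ∈ C
          · rw [if_pos hyC]
          · rw [if_neg hyC]
            by_contra hne
            have : insert y t ∈ S := (hmemS _).2 (fun h => hne h.symm)
            exact hyC (hclose t y₀ y hy₀t hyt hy₀C this)
        rw [this, hcyc]
      · push_neg at hex
        rw [simplicialBoundary]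
        apply Finset.sum_eq_zero
        intro y hy
        show (chainSign y t : F) * (if insert y t ∈ C then c (insert y t) else 0) = 0
        rw [if_neg (hex y (Finset.mem_compl.1 hy)), mul_zero]
    have hbc₂ : ∀ t, simplicialBoundary c₂ t = 0 := by
      intro t
      rw [hc₂]
      show simplicialBoundary (fun s => c s - c₁ s) t = 0
      rw [boundary_sub c c₁ t, hcyc, hbc₁, sub_zero]
    have hchain₂ : ∀ s, c₂ s ≠ 0 → s ∈ KK adj ∧ s.card = k + 1 := by
      intro s hs
      have h2 : c₂ s = if s ∈ C then 0 else c s := by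
        rw [hc₂, hc₁]
        show c s - (if s ∈ C then c s else 0) = _
        by_cases h : s ∈ C
        · rw [if_pos h, if_pos h, sub_self]
        · rw [if_neg h, if_neg h, sub_zero]
      rw [h2] at hs
      split at hs
      · exact absurd rfl hs
      · exact hchain s hs
    have hsupp₂ : {s | c₂ s ≠ 0}.ncard ≤ M := by
      have hsub : {s | c₂ s ≠ 0} ⊂ {s | c s ≠ 0} := by
        constructor
        · intro s hs
          simp only [Set.mem_setOf_eq] at hs ⊢
          intro h
          apply hs
          rw [hc₂, hc₁]
          show c s - (if s ∈ C then c s else 0) = 0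
          rw [h]
          split <;> simp
        · intro hsub2
          have h1 : c₂ s₀ = 0 := by
            rw [hc₂, hc₁]
            show c s₀ - (if s₀ ∈ C then c s₀ else 0) = 0
            rw [if_pos hs₀C, sub_self]
          have := hsub2 (Set.mem_setOf_eq ▸ hs₀ : s₀ ∈ {s | c s ≠ 0})
          simp only [Set.mem_setOf_eq] at this
          exact this h1
      have := Set.ncard_lt_ncard hsub (Set.toFinite _)
      omega
    obtain ⟨d₂, hd₂chain, hd₂b⟩ := ih c₂ hsupp₂ hchain₂ hbc₂
    -- handle the component chain c₁
    set V : Finset α := C.biUnion id with hV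
    have hchain₁ : ∀ s, c₁ s ≠ 0 → s ∈ KK adj ∧ s.card = k + 1 ∧ s ⊆ V := by
      intro s hs0
      have hs : (if s ∈ C then c s else 0) ≠ 0 := hs0
      split at hs
      next hsC =>
        have h1 := hchain s hs
        exact ⟨h1.1, h1.2, Finset.subset_biUnion_of_mem id hsC⟩
      next => exact absurd rfl hs
    have hclC : ∀ s ∈ C, s ∈ KK adj ∧ s.card = k + 1 := by
      intro s hsC
      exact hchain s ((hmemS s).1 ((hmemC s).1 hsC).1)
    have hreachC : ∀ s ∈ C, Relation.ReflTransGen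
        (fun a b => b ∈ C ∧ (a ∩ b).card = k) s₀ s := by
      intro s hsC
      have hpath := ((hmemC s).1 hsC).2
      clear hsC
      induction hpath with
      | refl => exact Relation.ReflTransGen.refl
      | @tail a b hpa step ihp =>
        have hbC : b ∈ C := (hmemC b).2 ⟨step.1, hpa.tail step⟩
        exact ihp.tail ⟨hbC, step.2⟩
    have hVcard : V.card + 1 ≤ V₁ := by
      by_contra hbig
      push_neg at hbig
      have hV1le : V₁ ≤ V.card := by omega
      obtain ⟨W, _, _, hWcard, hWinv⟩ :=
        greedy hsym C s₀ hs₀C hclC hreachC V₁ (by omega) hV1le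
      have := hE1 W hWcard
      omega
    have hGoodV : GoodG adj k V := by
      apply goodG_of_edges hsym
      intro W hWV h2k
      apply hE2 W _ h2k
      have := Finset.card_le_card hWV
      omega
    obtain ⟨d₁, hd₁chain, hd₁b⟩ := boundL hsym k V hGoodV c₁ hchain₁ hbc₁
    refine ⟨fun s => d₁ s + d₂ s, ?_, ?_⟩
    · intro s hs
      by_cases h1 : d₁ s ≠ 0
      · obtain ⟨h, h', _⟩ := hd₁chain s h1
        exact ⟨h, h'⟩
      · push_neg at h1
        have : d₂ s ≠ 0 := by
          intro h2
          apply hs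
          show d₁ s + d₂ s = 0
          rw [h1, h2, add_zero]
        exact hd₂chain s this
    · intro t
      show simplicialBoundary (fun s => d₁ s + d₂ s) t = c t
      rw [boundary_add d₁ d₂ t, hd₁b, hd₂b, hc₂]
      show c₁ t + (c t - c₁ t) = c t
      ring

end Master

section Prob
open MeasureTheory

lemma hasEdge_symm {n : ℕ} (ω : Sym2 (Fin n) → Bool) :
    ∀ a b, hasEdge ω a b → hasEdge ω b a := by
  intro a b ⟨h1, h2⟩
  exact ⟨h1.symm, by rwa [Sym2.eq_swap]⟩

instance erdosRenyi_prob (n : ℕ) (p : ENNReal) (hp : p ≤ 1) :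
    IsProbabilityMeasure (erdosRenyi n p hp) := by
  rw [erdosRenyi]
  infer_instance

lemma cylinder_measure (n : ℕ) (p : ENNReal) (hp : p ≤ 1) (Fs : Finset (Sym2 (Fin n))) :
    erdosRenyi n p hp {ω | ∀ e ∈ Fs, ω e = true} = p ^ Fs.card := by
  classical
  have hset : {ω : Sym2 (Fin n) → Bool | ∀ e ∈ Fs, ω e = true}
      = Set.pi Set.univ (fun e => if e ∈ Fs then {true} else Set.univ) := by
    ext ω
    simp only [Set.mem_setOf_eq, Set.mem_pi, Set.mem_univ, true_implies]
    constructor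
    · intro h e
      split
      next he => rw [Set.mem_singleton_iff]; exact h e he
      next => exact Set.mem_univ _
    · intro h e he
      have := h e
      rw [if_pos he, Set.mem_singleton_iff] at this
      exact this
  rw [erdosRenyi, hset, Measure.pi_pi]
  have hval : ∀ e : Sym2 (Fin n),
      (PMF.bernoulli p.toNNReal (by simpa using ENNReal.toNNReal_mono ENNReal.one_ne_top hp)).toMeasure (if e ∈ Fs then {true} else Set.univ)
      = (if e ∈ Fs then p else 1) := by
    intro e
    split
    · rw [PMF.toMeasure_apply_singleton _ _ (measurableSet_singleton true)]
      refine (PMF.bernoulli_apply _ true).trans ?_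
      exact ENNReal.coe_toNNReal (ne_top_of_le_ne_top ENNReal.one_ne_top hp)
    · exact measure_univ
  rw [Finset.prod_congr rfl (fun e _ => hval e)]
  rw [Finset.prod_ite_mem Finset.univ Fs (fun _ => p), Finset.univ_inter,
    Finset.prod_const]

/-- Union bound for the dense-subgraph event. -/
lemma badset_measure_le (n : ℕ) (p : ENNReal) (hp : p ≤ 1) (w m : ℕ) :
    erdosRenyi n p hp {ω | ∃ W : Finset (Fin n), W.card = w ∧ m ≤ eCount (hasEdge ω) W}
      ≤ (n : ENNReal) ^ w * 2 ^ (w * w) * p ^ m := by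
  classical
  set Bad := {ω : Sym2 (Fin n) → Bool |
    ∃ W : Finset (Fin n), W.card = w ∧ m ≤ eCount (hasEdge ω) W} with hBad
  have hsub : Bad ⊆ ⋃ W ∈ Finset.powersetCard w (Finset.univ : Finset (Fin n)),
      ⋃ Fs ∈ Finset.powersetCard m W.sym2, {ω | ∀ e ∈ Fs, ω e = true} := by
    intro ω hω
    obtain ⟨W, hWcard, hWe⟩ := hω
    obtain ⟨Fs, hFscard, hFs⟩ := eCount_witness (hasEdge_symm ω) hWe
    have hFsub : Fs ⊆ W.sym2 := by
      intro e he
      obtain ⟨a, b, rfl, _, haW, hbW, _⟩ := hFs e he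
      exact Finset.mk_mem_sym2_iff.2 ⟨haW, hbW⟩
    refine Set.mem_biUnion (Finset.mem_powersetCard.2 ⟨Finset.subset_univ W, hWcard⟩) ?_
    refine Set.mem_biUnion (Finset.mem_powersetCard.2 ⟨hFsub, hFscard⟩) ?_
    intro e he
    obtain ⟨a, b, rfl, _, _, _, hadj⟩ := hFs e he
    exact hadj.2
  calc erdosRenyi n p hp Bad
      ≤ ∑ W ∈ Finset.powersetCard w (Finset.univ : Finset (Fin n)),
          erdosRenyi n p hp (⋃ Fs ∈ Finset.powersetCard m W.sym2,
            {ω | ∀ e ∈ Fs, ω e = true}) :=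
        le_trans (measure_mono hsub) (measure_biUnion_finset_le _ _)
    _ ≤ ∑ W ∈ Finset.powersetCard w (Finset.univ : Finset (Fin n)),
          ∑ Fs ∈ Finset.powersetCard m W.sym2, erdosRenyi n p hp
            {ω | ∀ e ∈ Fs, ω e = true} :=
        Finset.sum_le_sum (fun W _ => measure_biUnion_finset_le _ _)
    _ ≤ (n : ENNReal) ^ w * 2 ^ (w * w) * p ^ m := by
        have hinner : ∀ W : Finset (Fin n), W ∈ Finset.powersetCard w Finset.univ →
            ∑ Fs ∈ Finset.powersetCard m W.sym2, erdosRenyi n p hp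
              {ω | ∀ e ∈ Fs, ω e = true} ≤ (2 : ENNReal) ^ (w * w) * p ^ m := by
          intro W hW
          have hWcard : W.card = w := (Finset.mem_powersetCard.1 hW).2
          have hcount : (Finset.powersetCard m W.sym2).card ≤ 2 ^ (w * w) := by
            calc (Finset.powersetCard m W.sym2).card
                ≤ W.sym2.powerset.card :=
                  Finset.card_le_card (fun t ht =>
                    Finset.mem_powerset.2 (Finset.mem_powersetCard.1 ht).1)
              _ = 2 ^ W.sym2.card := Finset.card_powerset _
              _ ≤ 2 ^ (w * w) := by
                  apply Nat.pow_le_pow_right (by norm_num)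
                  rw [Finset.card_sym2, hWcard]
                  calc Nat.choose (w + 1) 2 ≤ (w + 1) * w / 2 := by
                        rw [Nat.choose_two_right, Nat.add_sub_cancel]
                    _ ≤ w * w := by
                        rcases Nat.eq_zero_or_pos w with rfl | hw
                        · simp
                        · have : (w + 1) * w ≤ 2 * (w * w) := by nlinarith
                          omega
          calc ∑ Fs ∈ Finset.powersetCard m W.sym2, erdosRenyi n p hp
                {ω | ∀ e ∈ Fs, ω e = true}
              = ∑ Fs ∈ Finset.powersetCard m W.sym2, p ^ m := by
                apply Finset.sum_congr rfl
                intro Fs hFs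
                rw [cylinder_measure, (Finset.mem_powersetCard.1 hFs).2]
            _ = (Finset.powersetCard m W.sym2).card * p ^ m := by
                rw [Finset.sum_const, nsmul_eq_mul]
            _ ≤ (2 : ENNReal) ^ (w * w) * p ^ m := by
                apply mul_le_mul_left
                calc ((Finset.powersetCard m W.sym2).card : ENNReal)
                    ≤ ((2 ^ (w * w) : ℕ) : ENNReal) := Nat.cast_le.2 hcount
                  _ = (2 : ENNReal) ^ (w * w) := by push_cast; ring
        calc ∑ W ∈ Finset.powersetCard w (Finset.univ : Finset (Fin n)),
              ∑ Fs ∈ Finset.powersetCard m W.sym2, erdosRenyi n p hp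
                {ω | ∀ e ∈ Fs, ω e = true}
            ≤ ∑ _W ∈ Finset.powersetCard w (Finset.univ : Finset (Fin n)),
              (2 : ENNReal) ^ (w * w) * p ^ m := Finset.sum_le_sum hinner
          _ = ((Finset.powersetCard w (Finset.univ : Finset (Fin n))).card : ENNReal)
              * ((2 : ENNReal) ^ (w * w) * p ^ m) := by
              rw [Finset.sum_const, nsmul_eq_mul]
          _ ≤ (n : ENNReal) ^ w * 2 ^ (w * w) * p ^ m := by
              rw [mul_assoc]
              apply mul_le_mul_left
              rw [Finset.card_powersetCard, Finset.card_univ, Fintype.card_fin]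
              calc ((Nat.choose n w : ℕ) : ENNReal) ≤ ((n ^ w : ℕ) : ENNReal) :=
                    Nat.cast_le.2 (Nat.choose_le_pow n w)
                _ = (n : ENNReal) ^ w := by push_cast; ring

end Prob

section Limit
open MeasureTheory Filter

lemma rpow_tendsto_zero {c : ℝ} (hc : c < 0) :
    Tendsto (fun n : ℕ => (n : ENNReal) ^ c) atTop (nhds 0) := by
  have hreal : Tendsto (fun x : ℝ => x ^ c) atTop (nhds 0) := by
    have := tendsto_rpow_neg_atTop (y := -c) (by linarith)
    simpa [neg_neg] using this
  have hnat : Tendsto (fun n : ℕ => ((n : ℝ)) ^ c) atTop (nhds 0) :=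
    hreal.comp tendsto_natCast_atTop_atTop
  have hofReal : Tendsto (fun n : ℕ => ENNReal.ofReal ((n : ℝ) ^ c)) atTop
      (nhds (ENNReal.ofReal 0)) :=
    (ENNReal.continuous_ofReal.tendsto 0).comp hnat
  rw [ENNReal.ofReal_zero] at hofReal
  apply hofReal.congr'
  filter_upwards [eventually_ge_atTop 1] with n hn
  have hpos : (0 : ℝ) < (n : ℝ) := by positivity
  rw [← ENNReal.ofReal_natCast, ENNReal.ofReal_rpow_of_pos hpos]

lemma term_tendsto (α : ℝ) (p : ℕ → ENNReal)
    (hbound : ∀ n : ℕ, p n ≤ (n : ENNReal) ^ (-α)) (w m : ℕ) (hcond : (w : ℝ) < α * m) :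
    Tendsto (fun n : ℕ => (n : ENNReal) ^ w * 2 ^ (w * w) * (p n) ^ m) atTop (nhds 0) := by
  set g : ℕ → ENNReal :=
    fun n => (2 : ENNReal) ^ (w * w) * ((n : ENNReal) ^ w * ((n : ENNReal) ^ (-α)) ^ m)
    with hg
  have hle : ∀ n : ℕ, (n : ENNReal) ^ w * 2 ^ (w * w) * (p n) ^ m ≤ g n := by
    intro n
    rw [hg]
    calc (n : ENNReal) ^ w * 2 ^ (w * w) * (p n) ^ m
        = 2 ^ (w * w) * ((n : ENNReal) ^ w * (p n) ^ m) := by ring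
      _ ≤ 2 ^ (w * w) * ((n : ENNReal) ^ w * ((n : ENNReal) ^ (-α)) ^ m) := by
          apply mul_le_mul_right
          apply mul_le_mul_right
          exact pow_le_pow_left' (hbound n) m
  have hgz : Tendsto g atTop (nhds 0) := by
    rw [hg]
    have h0 : Tendsto (fun n : ℕ => (n : ENNReal) ^ w * ((n : ENNReal) ^ (-α)) ^ m)
        atTop (nhds 0) := by
      have hc : (w : ℝ) + (-α) * m < 0 := by push_cast; linarith
      apply (rpow_tendsto_zero hc).congr'
      filter_upwards [eventually_ge_atTop 1] with n hn
      have h1 : ((n : ℕ) : ENNReal) ≠ 0 := by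
        simp only [ne_eq, Nat.cast_eq_zero]
        omega
      have h2 : ((n : ℕ) : ENNReal) ≠ ⊤ := ENNReal.natCast_ne_top n
      rw [ENNReal.rpow_add _ _ h1 h2, ENNReal.rpow_natCast, ENNReal.rpow_mul,
        ENNReal.rpow_natCast]
    have := ENNReal.Tendsto.const_mul (a := (2 : ENNReal) ^ (w * w)) h0
      (Or.inr (ENNReal.pow_ne_top ENNReal.ofNat_ne_top))
    simpa using this
  exact tendsto_of_tendsto_of_tendsto_of_le_of_le tendsto_const_nhds hgz
    (fun n => zero_le) hle

end Limit


section Main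
open MeasureTheory Filter

/-- If `p_n ≤ n^{−α}` with `α > 1/k`, then w.h.p. the clique complex of `G(n,p_n)` has
vanishing `k`-th homology (over every field of coefficients). -/
theorem homology_vanishes_below_birth_threshold
    (k : ℕ) (hk : 1 ≤ k) (α : ℝ) (hα : 1 / (k : ℝ) < α)
    (p : ℕ → ENNReal) (hp : ∀ n, p n ≤ 1)
    (hbound : ∀ n : ℕ, p n ≤ (n : ENNReal) ^ (-α)) :
    Tendsto
      (fun n => erdosRenyi n (p n) (hp n)
        {ω | ∀ (F : Type) [Field F], HomologyVanishes (cliqueComplexOf ω) k F})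
      atTop (nhds 1) := by
  have hk0 : (0 : ℝ) < k := by exact_mod_cast hk
  have hαk : 1 < α * k := by
    have := (div_lt_iff₀ hk0).1 hα
    linarith
  obtain ⟨V₀, hV₀⟩ := exists_nat_gt ((α * (K2 k) + k + 1) / (α * k - 1))
  set V₁ := max (k + 1) V₀ with hV₁def
  have hV1a : k + 1 ≤ V₁ := le_max_left _ _
  have hK2le : K2 k ≤ k * V₁ := by
    have h2 := two_K2 k
    have h3 : k * (k + 1) ≤ k * V₁ := Nat.mul_le_mul_left k hV1a
    omega
  set m₁ := k * V₁ - K2 k with hm₁def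
  have hm₁R : (m₁ : ℝ) = (k : ℝ) * V₁ - K2 k := by
    rw [hm₁def, Nat.cast_sub hK2le]
    push_cast
    ring
  have hVreal : (V₁ : ℝ) < α * m₁ := by
    have hv0 : ((α * (K2 k) + k + 1) / (α * k - 1)) < (V₁ : ℝ) := by
      refine lt_of_lt_of_le hV₀ ?_
      exact_mod_cast le_max_right (k + 1) V₀
    have hpos : 0 < α * k - 1 := by linarith
    have hineq := (div_lt_iff₀ hpos).1 hv0
    rw [hm₁R]
    nlinarith
  set Bad : (n : ℕ) → Set (Sym2 (Fin n) → Bool) := fun n =>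
    {ω | ∃ W : Finset (Fin n), W.card = V₁ ∧ m₁ ≤ eCount (hasEdge ω) W} ∪
    ⋃ w ∈ Finset.Icc (2 * k + 1) V₁,
      {ω | ∃ W : Finset (Fin n), W.card = w ∧ k * w ≤ eCount (hasEdge ω) W}
    with hBadDef
  -- deterministic part
  have hdet : ∀ (n : ℕ) (ω : Sym2 (Fin n) → Bool), ω ∉ Bad n →
      ∀ (F : Type) [Field F], HomologyVanishes (cliqueComplexOf ω) k F := by
    intro n ω hω F instF c hchain hcyc
    rw [hBadDef, Set.mem_union, not_or] at hω
    obtain ⟨hA, hB⟩ := hω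
    simp only [Set.mem_setOf_eq, not_exists, not_and, not_le] at hA
    have hE1 : ∀ U : Finset (Fin n), U.card = V₁ →
        eCount (hasEdge ω) U + K2 k < k * V₁ := by
      intro U hU
      have := hA U hU
      omega
    have hE2 : ∀ W : Finset (Fin n), W.card ≤ V₁ → 2 * k + 1 ≤ W.card →
        eCount (hasEdge ω) W < k * W.card := by
      intro W h1 h2
      by_contra hcon
      push_neg at hcon
      apply hB
      rw [Set.mem_iUnion]
      refine ⟨W.card, ?_⟩
      rw [Set.mem_iUnion]
      exact ⟨Finset.mem_Icc.2 ⟨h2, h1⟩, ⟨W, rfl, hcon⟩⟩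
    obtain ⟨d, hd1, hd2⟩ := detAux (hasEdge_symm ω) k V₁ hk hV1a hE1 hE2
      ({s | c s ≠ 0}.ncard) c le_rfl (fun s hs => hchain s hs)
      (fun t => congrFun hcyc t)
    exact ⟨d, fun s hs => ⟨(hd1 s hs).1, (hd1 s hs).2⟩, funext hd2⟩
  -- probability bound for the bad event
  have hBadle : ∀ n : ℕ, erdosRenyi n (p n) (hp n) (Bad n) ≤
      ((n : ENNReal) ^ V₁ * 2 ^ (V₁ * V₁) * (p n) ^ m₁) +
      ∑ w ∈ Finset.Icc (2 * k + 1) V₁,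
        ((n : ENNReal) ^ w * 2 ^ (w * w) * (p n) ^ (k * w)) := by
    intro n
    rw [hBadDef]
    refine le_trans (measure_union_le _ _) (add_le_add ?_ ?_)
    · exact badset_measure_le n (p n) (hp n) V₁ m₁
    · refine le_trans (measure_biUnion_finset_le _ _) (Finset.sum_le_sum ?_)
      intro w _
      exact badset_measure_le n (p n) (hp n) w (k * w)
  have hBadTendsto : Tendsto (fun n => erdosRenyi n (p n) (hp n) (Bad n))
      atTop (nhds 0) := by
    have hsum : Tendsto (fun n : ℕ =>
        ((n : ENNReal) ^ V₁ * 2 ^ (V₁ * V₁) * (p n) ^ m₁) +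
        ∑ w ∈ Finset.Icc (2 * k + 1) V₁,
          ((n : ENNReal) ^ w * 2 ^ (w * w) * (p n) ^ (k * w)))
        atTop (nhds (0 + ∑ _w ∈ Finset.Icc (2 * k + 1) V₁, (0 : ENNReal))) := by
      apply Tendsto.add
      · exact term_tendsto α p hbound V₁ m₁ hVreal
      · apply tendsto_finset_sum
        intro w hw
        apply term_tendsto α p hbound w (k * w)
        have hw1 : 1 ≤ w := by
          have := (Finset.mem_Icc.1 hw).1
          omega
        have : (1 : ℝ) ≤ w := by exact_mod_cast hw1
        push_cast
        nlinarith
    simp only [Finset.sum_const_zero, add_zero] at hsum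
    exact tendsto_of_tendsto_of_tendsto_of_le_of_le tendsto_const_nhds hsum
      (fun n => zero_le) hBadle
  -- conclusion
  have hlower : ∀ n : ℕ, 1 - erdosRenyi n (p n) (hp n) (Bad n) ≤
      erdosRenyi n (p n) (hp n)
        {ω | ∀ (F : Type) [Field F], HomologyVanishes (cliqueComplexOf ω) k F} := by
    intro n
    have hsub : (Set.univ : Set (Sym2 (Fin n) → Bool)) ⊆
        {ω | ∀ (F : Type) [Field F], HomologyVanishes (cliqueComplexOf ω) k F}
          ∪ Bad n := by
      intro ω _
      by_cases h : ω ∈ Bad n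
      · exact Or.inr h
      · exact Or.inl (hdet n ω h)
    have h1 : (1 : ENNReal) ≤ erdosRenyi n (p n) (hp n)
        {ω | ∀ (F : Type) [Field F], HomologyVanishes (cliqueComplexOf ω) k F}
        + erdosRenyi n (p n) (hp n) (Bad n) := by
      calc (1 : ENNReal) = erdosRenyi n (p n) (hp n) Set.univ := measure_univ.symm
        _ ≤ erdosRenyi n (p n) (hp n)
            ({ω | ∀ (F : Type) [Field F], HomologyVanishes (cliqueComplexOf ω) k F}
              ∪ Bad n) := measure_mono hsub
        _ ≤ _ := measure_union_le _ _
    exact tsub_le_iff_right.2 h1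
  have hupper : ∀ n : ℕ, erdosRenyi n (p n) (hp n)
      {ω | ∀ (F : Type) [Field F], HomologyVanishes (cliqueComplexOf ω) k F} ≤ 1 :=
    fun n => prob_le_one
  have hlowTendsto : Tendsto
      (fun n => 1 - erdosRenyi n (p n) (hp n) (Bad n)) atTop (nhds 1) := by
    have := ((ENNReal.continuous_sub_left (a := 1) ENNReal.one_ne_top).tendsto 0).comp
      hBadTendsto
    simpa [Function.comp_def] using this
  exact tendsto_of_tendsto_of_tendsto_of_le_of_le hlowTendsto tendsto_const_nhds
    hlower hupper

end Main
end
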